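/- arXiv:1312.4349 — 3 statements merged into one kernel-verified Lean document; each statement's English description precedes it below -/
import Mathlib

section
/- Let F be a convex class of functions bounded by b with |Y| ≤ b a.s., f* a minimizer of the squared risk over F, and L_f the excess loss of f relative to f*. Then every f ∈ F satisfies the Bernstein condition E[L_f²] ≤ (4b)² · E[L_f]. -/
set_option maxHeartbeats 800000

open MeasureTheory

private lemma integrable_of_abs_bound {Ω : Type*} [MeasurableSpace Ω]
    (μ : Measure Ω) [IsProbabilityMeasure μ] (u : Ω → ℝ)
    (hu : AEStronglyMeasurable u μ) (C : ℝ) (h : ∀ᵐ ω ∂μ, |u ω| ≤ C) :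
    Integrable u μ := by
  refine Integrable.mono' (integrable_const C) hu ?_
  filter_upwards [h] with ω hω
  simpa using hω

/-- Bernstein condition for the excess loss class of a convex class of bounded
functions: E L_f² ≤ (4b)² E L_f. -/
theorem stmt3 {Ω 𝒳 : Type*} [MeasurableSpace Ω] [MeasurableSpace 𝒳]
    (μ : Measure Ω) [IsProbabilityMeasure μ]
    (X : Ω → 𝒳) (Y : Ω → ℝ) (hX : Measurable X) (hY : Measurable Y)
    (b : ℝ) (hb : 0 ≤ b) (hYb : ∀ᵐ ω ∂μ, |Y ω| ≤ b)
    (F : Set (𝒳 → ℝ)) (hFmeas : ∀ f ∈ F, Measurable f)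
    (hFb : ∀ f ∈ F, ∀ᵐ ω ∂μ, |f (X ω)| ≤ b)
    (hconv : ∀ f ∈ F, ∀ g ∈ F, ∀ θ : ℝ, 0 ≤ θ → θ ≤ 1 →
      (fun x => θ * f x + (1 - θ) * g x) ∈ F)
    (fstar : 𝒳 → ℝ) (hfstar : fstar ∈ F)
    (hmin : ∀ f ∈ F, ∫ ω, (Y ω - fstar (X ω))^2 ∂μ ≤ ∫ ω, (Y ω - f (X ω))^2 ∂μ) :
    ∀ f ∈ F,
      ∫ ω, ((Y ω - f (X ω))^2 - (Y ω - fstar (X ω))^2)^2 ∂μ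
        ≤ (4*b)^2 * ∫ ω, ((Y ω - f (X ω))^2 - (Y ω - fstar (X ω))^2) ∂μ := by
  intro f hf
  set g : Ω → ℝ := fun ω => f (X ω) with hg_def
  set h : Ω → ℝ := fun ω => fstar (X ω) with hh_def
  have hgm : Measurable g := (hFmeas f hf).comp hX
  have hhm : Measurable h := (hFmeas fstar hfstar).comp hX
  have hgb : ∀ᵐ ω ∂μ, |g ω| ≤ b := hFb f hf
  have hhb : ∀ᵐ ω ∂μ, |h ω| ≤ b := hFb fstar hfstar
  have hbnd : ∀ᵐ ω ∂μ, |Y ω| ≤ b ∧ |g ω| ≤ b ∧ |h ω| ≤ b := by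
    filter_upwards [hYb, hgb, hhb] with ω h1 h2 h3
    exact ⟨h1, h2, h3⟩
  -- measurability of all integrands
  have m1 : Measurable (fun ω => (Y ω - h ω)^2) := ((hY.sub hhm).pow_const 2)
  have m2 : Measurable (fun ω => (g ω - h ω) * (Y ω - h ω)) :=
    (hgm.sub hhm).mul (hY.sub hhm)
  have m3 : Measurable (fun ω => (g ω - h ω)^2) := ((hgm.sub hhm).pow_const 2)
  have mL : Measurable (fun ω => (Y ω - g ω)^2 - (Y ω - h ω)^2) :=
    ((hY.sub hgm).pow_const 2).sub ((hY.sub hhm).pow_const 2)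
  have mL2 : Measurable (fun ω => ((Y ω - g ω)^2 - (Y ω - h ω)^2)^2) :=
    mL.pow_const 2
  -- integrability
  have i1 : Integrable (fun ω => (Y ω - h ω)^2) μ := by
    refine integrable_of_abs_bound μ _ m1.aestronglyMeasurable (4*b^2) ?_
    filter_upwards [hbnd] with ω ⟨h1, h2, h3⟩
    rw [abs_le] at *; constructor <;> nlinarith
  have i2 : Integrable (fun ω => (g ω - h ω) * (Y ω - h ω)) μ := by
    refine integrable_of_abs_bound μ _ m2.aestronglyMeasurable (4*b^2) ?_
    filter_upwards [hbnd] with ω ⟨h1, h2, h3⟩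
    rw [abs_le] at *; constructor <;> nlinarith
  have i3 : Integrable (fun ω => (g ω - h ω)^2) μ := by
    refine integrable_of_abs_bound μ _ m3.aestronglyMeasurable (4*b^2) ?_
    filter_upwards [hbnd] with ω ⟨h1, h2, h3⟩
    rw [abs_le] at *; constructor <;> nlinarith
  have iL : Integrable (fun ω => (Y ω - g ω)^2 - (Y ω - h ω)^2) μ := by
    refine integrable_of_abs_bound μ _ mL.aestronglyMeasurable (8*b^2) ?_
    filter_upwards [hbnd] with ω ⟨h1, h2, h3⟩
    rw [abs_le] at *; constructor <;> nlinarith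
  have iL2 : Integrable (fun ω => ((Y ω - g ω)^2 - (Y ω - h ω)^2)^2) μ := by
    refine integrable_of_abs_bound μ _ mL2.aestronglyMeasurable (64*b^4) ?_
    filter_upwards [hbnd] with ω ⟨h1, h2, h3⟩
    obtain ⟨h1a, h1b⟩ := abs_le.mp h1
    obtain ⟨h2a, h2b⟩ := abs_le.mp h2
    obtain ⟨h3a, h3b⟩ := abs_le.mp h3
    have hsq : ((Y ω - g ω)^2 - (Y ω - h ω)^2)^2
        = (h ω - g ω)^2 * (2*Y ω - g ω - h ω)^2 := by ring
    have e1 : (h ω - g ω)^2 ≤ (2*b)^2 := by nlinarith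
    have e2 : (2*Y ω - g ω - h ω)^2 ≤ (4*b)^2 := by nlinarith
    rw [abs_le]
    constructor
    · nlinarith [sq_nonneg ((Y ω - g ω)^2 - (Y ω - h ω)^2), sq_nonneg (b^2)]
    · rw [hsq]
      nlinarith [sq_nonneg (h ω - g ω), sq_nonneg (2*Y ω - g ω - h ω)]
  set I2 : ℝ := ∫ ω, (g ω - h ω) * (Y ω - h ω) ∂μ with hI2
  set I3 : ℝ := ∫ ω, (g ω - h ω)^2 ∂μ with hI3
  have hI3nn : 0 ≤ I3 := integral_nonneg (fun ω => sq_nonneg _)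
  -- key inequality from minimality and convexity
  have hkey : ∀ θ : ℝ, 0 ≤ θ → θ ≤ 1 → 2*θ*I2 ≤ θ^2*I3 := by
    intro θ hθ0 hθ1
    have hmem := hconv f hf fstar hfstar θ hθ0 hθ1
    have hm := hmin _ hmem
    have hrw : ∫ ω, (Y ω - (fun x => θ * f x + (1 - θ) * fstar x) (X ω))^2 ∂μ
        = (∫ ω, (Y ω - h ω)^2 ∂μ) - 2*θ*I2 + θ^2*I3 := by
      have hpt : ∀ ω, (Y ω - (fun x => θ * f x + (1 - θ) * fstar x) (X ω))^2
          = (Y ω - h ω)^2 + ((-(2*θ)) * ((g ω - h ω) * (Y ω - h ω))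
            + θ^2 * (g ω - h ω)^2) := by
        intro ω; simp only [hg_def, hh_def]; ring
      rw [integral_congr_ae (Filter.Eventually.of_forall hpt)]
      have ia : Integrable (fun ω => (-(2*θ)) * ((g ω - h ω) * (Y ω - h ω))
          + θ^2 * (g ω - h ω)^2) μ := (i2.const_mul _).add (i3.const_mul _)
      rw [integral_add i1 ia, integral_add (i2.const_mul _) (i3.const_mul _),
        integral_const_mul, integral_const_mul]
      ring
    rw [hrw] at hm
    linarith
  -- I2 ≤ 0
  have hI2le : I2 ≤ 0 := by
    by_contra hpos
    push_neg at hpos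
    set θ : ℝ := min 1 (I2 / (I3 + 1)) with hθ
    have hθ0 : 0 < θ := lt_min one_pos (div_pos hpos (by linarith))
    have hθ1 : θ ≤ 1 := min_le_left _ _
    have h1 := hkey θ hθ0.le hθ1
    have hθle : θ ≤ I2 / (I3 + 1) := min_le_right _ _
    have : θ * I3 ≤ I2 * I3 / (I3 + 1) := by
      calc θ * I3 ≤ (I2 / (I3 + 1)) * I3 := by nlinarith
        _ = I2 * I3 / (I3 + 1) := by ring
    have hlt : θ * I3 < 2 * I2 := by
      have : I2 * I3 / (I3 + 1) < 2 * I2 := by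
        rw [div_lt_iff₀ (by linarith)]
        nlinarith
      linarith
    nlinarith
  -- pointwise identity for L
  have hLrw : ∫ ω, ((Y ω - g ω)^2 - (Y ω - h ω)^2) ∂μ = I3 - 2*I2 := by
    have hpt : ∀ ω, (Y ω - g ω)^2 - (Y ω - h ω)^2
        = (g ω - h ω)^2 + (-2) * ((g ω - h ω) * (Y ω - h ω)) := by
      intro ω; ring
    rw [integral_congr_ae (Filter.Eventually.of_forall hpt),
      integral_add i3 (i2.const_mul _), integral_const_mul]
    ring
  have hstep1 : ∫ ω, ((Y ω - g ω)^2 - (Y ω - h ω)^2)^2 ∂μ ≤ (4*b)^2 * I3 := by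
    have hmono : ∫ ω, ((Y ω - g ω)^2 - (Y ω - h ω)^2)^2 ∂μ
        ≤ ∫ ω, (4*b)^2 * (g ω - h ω)^2 ∂μ := by
      refine integral_mono_ae iL2 (i3.const_mul _) ?_
      filter_upwards [hbnd] with ω ⟨h1, h2, h3⟩
      obtain ⟨h1a, h1b⟩ := abs_le.mp h1
      obtain ⟨h2a, h2b⟩ := abs_le.mp h2
      obtain ⟨h3a, h3b⟩ := abs_le.mp h3
      have hsq : ((Y ω - g ω)^2 - (Y ω - h ω)^2)^2
          = (g ω - h ω)^2 * (2*Y ω - g ω - h ω)^2 := by ring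
      have e2 : (2*Y ω - g ω - h ω)^2 ≤ (4*b)^2 := by nlinarith
      rw [hsq]
      calc (g ω - h ω)^2 * (2*Y ω - g ω - h ω)^2
          ≤ (g ω - h ω)^2 * (4*b)^2 :=
            mul_le_mul_of_nonneg_left e2 (sq_nonneg _)
        _ = (4*b)^2 * (g ω - h ω)^2 := by ring
    rwa [integral_const_mul] at hmono
  calc ∫ ω, ((Y ω - g ω)^2 - (Y ω - h ω)^2)^2 ∂μ ≤ (4*b)^2 * I3 := hstep1
    _ ≤ (4*b)^2 * (I3 - 2*I2) := by nlinarith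
    _ = (4*b)^2 * ∫ ω, ((Y ω - g ω)^2 - (Y ω - h ω)^2) ∂μ := by rw [hLrw]
end

section
/- Let G be a star-shaped (at 0) class of functions and suppose that on some event, |Ph - P_n h| ≤ (1/2)ρ for every h ∈ G with Ph ≤ ρ, where ρ > 0. Then on the same event, for every g ∈ G, |Pg - P_n g| ≤ (1/2) max(Pg, ρ). -/
open MeasureTheory

/-- If on a given sample the deviations are at most ρ/2 on the ρ-localized part of a
star-shaped class G, then for every g ∈ G, |Pg - P_n g| ≤ (1/2) max(Pg, ρ). -/
theorem stmt5 {𝒵 : Type*} [MeasurableSpace 𝒵] (ν : Measure 𝒵) [IsProbabilityMeasure ν]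
    (n : ℕ) (hn : 0 < n) (z : Fin n → 𝒵)
    (G : Set (𝒵 → ℝ)) (hGint : ∀ g ∈ G, Integrable g ν)
    (hstar : ∀ g ∈ G, ∀ α : ℝ, 0 ≤ α → α ≤ 1 → (fun t => α * g t) ∈ G)
    (hpos : ∀ g ∈ G, 0 ≤ ∫ t, g t ∂ν)
    (ρ : ℝ) (hρ : 0 < ρ)
    (hiso : ∀ h ∈ G, (∫ t, h t ∂ν) ≤ ρ →
      |(∫ t, h t ∂ν) - (1/n : ℝ) * ∑ i, h (z i)| ≤ ρ/2) :
    ∀ g ∈ G, |(∫ t, g t ∂ν) - (1/n : ℝ) * ∑ i, g (z i)|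
      ≤ (1/2) * max (∫ t, g t ∂ν) ρ := by
  intro g hg
  by_cases hle : (∫ t, g t ∂ν) ≤ ρ
  · calc |(∫ t, g t ∂ν) - (1/n : ℝ) * ∑ i, g (z i)| ≤ ρ/2 := hiso g hg hle
      _ ≤ (1/2) * max (∫ t, g t ∂ν) ρ := by
        have := le_max_right (∫ t, g t ∂ν) ρ; linarith
  · push_neg at hle
    have hPg : (0:ℝ) < ∫ t, g t ∂ν := lt_trans hρ hle
    set α : ℝ := ρ / ∫ t, g t ∂ν with hα
    have hα0 : 0 ≤ α := le_of_lt (div_pos hρ hPg)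
    have hα1 : α ≤ 1 := by
      rw [hα, div_le_one hPg]; exact le_of_lt hle
    have hmem := hstar g hg α hα0 hα1
    have hint : (∫ t, α * g t ∂ν) = α * ∫ t, g t ∂ν := by
      simpa using integral_const_mul α g
    have hval : (∫ t, α * g t ∂ν) = ρ := by
      rw [hint, hα, div_mul_cancel₀]; exact ne_of_gt hPg
    have h1 := hiso _ hmem (by rw [hval])
    rw [hint] at h1
    have hsum : (1/n : ℝ) * ∑ i, α * g (z i) = α * ((1/n : ℝ) * ∑ i, g (z i)) := by
      rw [Finset.mul_sum]; ring_nf; rw [← Finset.mul_sum]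
    rw [hsum, ← mul_sub, abs_mul, abs_of_nonneg hα0] at h1
    have key : |(∫ t, g t ∂ν) - (1/n : ℝ) * ∑ i, g (z i)| ≤ (∫ t, g t ∂ν) / 2 := by
      have hαpos : 0 < α := div_pos hρ hPg
      rw [← mul_le_mul_iff_right₀ hαpos]
      calc α * |(∫ t, g t ∂ν) - (1/n : ℝ) * ∑ i, g (z i)| ≤ ρ/2 := h1
        _ = α * ((∫ t, g t ∂ν) / 2) := by
          rw [hα]; field_simp
    calc |(∫ t, g t ∂ν) - (1/n : ℝ) * ∑ i, g (z i)| ≤ (∫ t, g t ∂ν) / 2 := key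
      _ ≤ (1/2) * max (∫ t, g t ∂ν) ρ := by
        have := le_max_left (∫ t, g t ∂ν) ρ; linarith
end

section
/- Maurey's empirical method bound: Let F = {f_1,…,f_M} be functions with |f_j(X)| ≤ b a.s., |Y| ≤ b a.s., and let C = conv(F) and C' = {(1/m) Σ_{i=1}^m h_i : h_1,…,h_m ∈ F}. Then min_{f ∈ C'} R(f) ≤ min_{f ∈ C} R(f) + 4b²/m, where R(f) = E(Y - f(X))². -/
open MeasureTheory Finset
open Finset

lemma sum_prod_pi {ι : Type*} [Fintype ι] [DecidableEq ι] (m : ℕ) (d : Fin m → ι → ℝ) :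
    ∑ h : Fin m → ι, ∏ k, d k (h k) = ∏ k, ∑ j, d k j := by
  rw [Finset.prod_univ_sum, Fintype.piFinset_univ]

section key
variable {ι : Type*} [Fintype ι] [DecidableEq ι] {m : ℕ} (p : ι → ℝ)

lemma marg1 (hp1 : ∑ i, p i = 1) (φ : ι → ℝ) (k₀ : Fin m) :
    ∑ h : Fin m → ι, (∏ k, p (h k)) * φ (h k₀) = ∑ j, p j * φ j := by
  have e1 : ∀ h : Fin m → ι, (∏ k, p (h k)) * φ (h k₀)
      = ∏ k, (p (h k) * (if k = k₀ then φ (h k) else 1)) := by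
    intro h
    rw [Finset.prod_mul_distrib, Finset.prod_ite_eq' Finset.univ k₀ (fun k => φ (h k))]
    simp
  rw [Finset.sum_congr rfl (fun h _ => e1 h),
    sum_prod_pi m (fun k x => p x * (if k = k₀ then φ x else 1))]
  have e2 : ∀ k : Fin m, (∑ j, p j * (if k = k₀ then φ j else 1))
      = if k = k₀ then ∑ j, p j * φ j else 1 := by
    intro k; by_cases hk : k = k₀ <;> simp [hk, hp1]
  rw [Finset.prod_congr rfl (fun k _ => e2 k),
    Finset.prod_ite_eq' Finset.univ k₀ (fun _ => ∑ j, p j * φ j)]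
  simp

lemma marg2 (hp1 : ∑ i, p i = 1) (φ ψ : ι → ℝ) (k₀ l₀ : Fin m) (hne : k₀ ≠ l₀) :
    ∑ h : Fin m → ι, (∏ k, p (h k)) * (φ (h k₀) * ψ (h l₀))
      = (∑ j, p j * φ j) * (∑ j, p j * ψ j) := by
  have e1 : ∀ h : Fin m → ι, (∏ k, p (h k)) * (φ (h k₀) * ψ (h l₀))
      = ∏ k, (p (h k) * ((if k = k₀ then φ (h k) else 1) * (if k = l₀ then ψ (h k) else 1))) := by
    intro h
    rw [Finset.prod_mul_distrib, Finset.prod_mul_distrib,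
      Finset.prod_ite_eq' Finset.univ k₀ (fun k => φ (h k)),
      Finset.prod_ite_eq' Finset.univ l₀ (fun k => ψ (h k))]
    simp
  rw [Finset.sum_congr rfl (fun h _ => e1 h),
    sum_prod_pi m (fun k x => p x * ((if k = k₀ then φ x else 1) * (if k = l₀ then ψ x else 1)))]
  have e2 : ∀ k : Fin m, (∑ j, p j * ((if k = k₀ then φ j else 1) * (if k = l₀ then ψ j else 1)))
      = (if k = k₀ then ∑ j, p j * φ j else 1) * (if k = l₀ then ∑ j, p j * ψ j else 1) := by
    intro k
    by_cases hk : k = k₀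
    · subst hk
      simp [if_neg hne, hp1]
    · by_cases hl : k = l₀ <;> simp [hk, hl, hp1, (Ne.symm hne : l₀ ≠ k₀)]
  rw [Finset.prod_congr rfl (fun k _ => e2 k), Finset.prod_mul_distrib,
    Finset.prod_ite_eq' Finset.univ k₀ (fun _ => ∑ j, p j * φ j),
    Finset.prod_ite_eq' Finset.univ l₀ (fun _ => ∑ j, p j * ψ j)]
  simp

lemma maurey_key (hm : 0 < m) (hp : ∀ i, 0 ≤ p i) (hp1 : ∑ i, p i = 1)
    (a : ι → ℝ) (t b : ℝ) (ha : ∀ i, |a i| ≤ b) :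
    ∑ h : Fin m → ι, (∏ k, p (h k)) * (t - (1/m : ℝ) * ∑ k, a (h k))^2
      ≤ (t - ∑ i, p i * a i)^2 + 4 * b^2 / m := by
  have hm' : (m : ℝ) ≠ 0 := Nat.cast_ne_zero.mpr hm.ne'
  have hmpos : (0:ℝ) < m := Nat.cast_pos.mpr hm
  set abar : ℝ := ∑ i, p i * a i with habar
  set q : ι → ℝ := fun i => a i - abar with hq
  have hq0 : ∑ i, p i * q i = 0 := by
    simp only [hq, mul_sub, Finset.sum_sub_distrib, ← Finset.sum_mul, hp1, one_mul]
    simp [habar]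
  have habs : |abar| ≤ b := by
    calc |abar| ≤ ∑ i, |p i * a i| := Finset.abs_sum_le_sum_abs _ _
      _ ≤ ∑ i, p i * b := by
          apply Finset.sum_le_sum
          intro i _
          rw [abs_mul, abs_of_nonneg (hp i)]
          exact mul_le_mul_of_nonneg_left (ha i) (hp i)
      _ = b := by rw [← Finset.sum_mul, hp1, one_mul]
  have hqb : ∀ i, q i * q i ≤ 4 * b^2 := by
    intro i
    have h1 : |q i| ≤ 2 * b := by
      calc |q i| ≤ |a i| + |abar| := abs_sub _ _
        _ ≤ 2 * b := by linarith [ha i, habs]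
    calc q i * q i = |q i| * |q i| := (abs_mul_abs_self _).symm
      _ ≤ (2*b) * (2*b) := mul_le_mul h1 h1 (abs_nonneg _) (by linarith [abs_nonneg (q i)])
      _ = 4 * b^2 := by ring
  set D : ℝ := ∑ i, p i * (q i * q i) with hD
  have hDle : D ≤ 4 * b^2 := by
    calc D ≤ ∑ i, p i * (4 * b^2) := by
          apply Finset.sum_le_sum
          intro i _
          exact mul_le_mul_of_nonneg_left (hqb i) (hp i)
      _ = 4 * b^2 := by rw [← Finset.sum_mul, hp1, one_mul]
  -- expand the square
  have expand : ∀ h : Fin m → ι,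
      (∏ k, p (h k)) * (t - (1/m : ℝ) * ∑ k, a (h k))^2
      = (∏ k, p (h k)) * (t - abar)^2
        - (2*(t - abar)*(1/m)) * ((∏ k, p (h k)) * ∑ k, q (h k))
        + (1/m : ℝ)^2 * ((∏ k, p (h k)) * ((∑ k, q (h k)) * (∑ k, q (h k)))) := by
    intro h
    have hsum : (∑ k : Fin m, a (h k)) = (∑ k : Fin m, q (h k)) + m * abar := by
      simp only [hq, Finset.sum_sub_distrib, Finset.sum_const, Finset.card_univ,
        Fintype.card_fin, nsmul_eq_mul]
      ring
    rw [hsum]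
    have : (1/m : ℝ) * ((∑ k : Fin m, q (h k)) + m * abar)
        = (1/m : ℝ) * (∑ k : Fin m, q (h k)) + abar := by
      field_simp
    rw [this]
    ring
  rw [Finset.sum_congr rfl (fun h _ => expand h), Finset.sum_add_distrib,
    Finset.sum_sub_distrib]
  have hW1 : ∑ h : Fin m → ι, (∏ k, p (h k)) = 1 := by
    have := sum_prod_pi (ι := ι) m (fun _ j => p j)
    simpa [hp1] using this
  have T1 : ∑ h : Fin m → ι, (∏ k, p (h k)) * (t - abar)^2 = (t - abar)^2 := by
    rw [← Finset.sum_mul, hW1, one_mul]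
  have T2 : ∑ h : Fin m → ι, (2*(t - abar)*(1/m)) * ((∏ k, p (h k)) * ∑ k, q (h k)) = 0 := by
    rw [← Finset.mul_sum]
    have : ∑ h : Fin m → ι, (∏ k, p (h k)) * ∑ k, q (h k) = 0 := by
      have e : ∀ h : Fin m → ι, (∏ k, p (h k)) * ∑ k, q (h k)
          = ∑ k, (∏ k', p (h k')) * q (h k) := fun h => Finset.mul_sum _ _ _
      rw [Finset.sum_congr rfl (fun h _ => e h), Finset.sum_comm]
      simp only [marg1 p hp1 q, hq0]
      simp
    rw [this, mul_zero]
  have T3 : ∑ h : Fin m → ι,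
      (1/m : ℝ)^2 * ((∏ k, p (h k)) * ((∑ k, q (h k)) * (∑ k, q (h k)))) = D / m := by
    rw [← Finset.mul_sum]
    have e : ∀ h : Fin m → ι, (∏ k, p (h k)) * ((∑ k, q (h k)) * (∑ k, q (h k)))
        = ∑ k, ∑ l, (∏ k', p (h k')) * (q (h k) * q (h l)) := by
      intro h
      rw [Finset.sum_mul_sum, Finset.mul_sum]
      congr 1; ext k
      rw [Finset.mul_sum]
    rw [Finset.sum_congr rfl (fun h _ => e h), Finset.sum_comm]
    have e2 : ∀ k : Fin m, ∑ h : Fin m → ι, ∑ l, (∏ k', p (h k')) * (q (h k) * q (h l))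
        = ∑ l, ∑ h : Fin m → ι, (∏ k', p (h k')) * (q (h k) * q (h l)) :=
      fun k => Finset.sum_comm
    rw [Finset.sum_congr rfl (fun k _ => e2 k)]
    have e3 : ∀ k l : Fin m, ∑ h : Fin m → ι, (∏ k', p (h k')) * (q (h k) * q (h l))
        = if l = k then D else 0 := by
      intro k l
      by_cases hkl : l = k
      · subst hkl
        rw [if_pos rfl, hD]
        exact marg1 p hp1 (fun i => q i * q i) l
      · rw [if_neg hkl, marg2 p hp1 q q k l (fun hc => hkl hc.symm), hq0, zero_mul]
    have e4 : ∀ k : Fin m, ∑ l, (if l = k then D else 0) = D := by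
      intro k
      rw [Finset.sum_ite_eq' Finset.univ k (fun _ => D)]
      simp
    calc (1/m : ℝ)^2 * ∑ k : Fin m, ∑ l, ∑ h : Fin m → ι,
            (∏ k', p (h k')) * (q (h k) * q (h l))
        = (1/m : ℝ)^2 * ∑ k : Fin m, D := by
          congr 1
          refine Finset.sum_congr rfl (fun k _ => ?_)
          rw [Finset.sum_congr rfl (fun l _ => e3 k l), e4 k]
      _ = D / m := by
          simp only [Finset.sum_const, Finset.card_univ, Fintype.card_fin, nsmul_eq_mul]
          field_simp
  rw [T1, T2, T3]
  have : D / m ≤ 4 * b^2 / m := by gcongr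
  linarith

end key

lemma sqint {Ω : Type*} [MeasurableSpace Ω] (μ : Measure Ω) [IsProbabilityMeasure μ]
    (b : ℝ) (V : Ω → ℝ) (hV : Measurable V) (hVb : ∀ᵐ ω ∂μ, |V ω| ≤ 2*b) :
    Integrable (fun ω => (V ω)^2) μ := by
  apply Integrable.mono' (integrable_const (4*b^2)) ((hV.pow_const 2).aestronglyMeasurable)
  filter_upwards [hVb] with ω hω
  rw [Real.norm_eq_abs, abs_of_nonneg (sq_nonneg _)]
  nlinarith [sq_abs (V ω), abs_nonneg (V ω)]

/-- Maurey's empirical method bound: min_{f ∈ C'} R(f) ≤ min_{f ∈ conv(F)} R(f) + 4b²/m,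
stated as: for every g in the convex hull, some m-term uniform average of dictionary
elements has risk at most R(g) + 4b²/m. -/
theorem stmt9 {Ω 𝒳 : Type*} [MeasurableSpace Ω] [MeasurableSpace 𝒳]
    (μ : Measure Ω) [IsProbabilityMeasure μ]
    (X : Ω → 𝒳) (Y : Ω → ℝ) (hX : Measurable X) (hY : Measurable Y)
    (b : ℝ) (hb : 0 ≤ b) (hYb : ∀ᵐ ω ∂μ, |Y ω| ≤ b)
    (M : ℕ) (f : Fin M → 𝒳 → ℝ) (hfm : ∀ j, Measurable (f j))
    (hfb : ∀ j, ∀ᵐ ω ∂μ, |f j (X ω)| ≤ b)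
    (m : ℕ) (hm : 0 < m) :
    ∀ g ∈ convexHull ℝ (Set.range f),
      ∃ h : Fin m → Fin M,
        (∫ ω, (Y ω - (1/m : ℝ) * ∑ i, f (h i) (X ω))^2 ∂μ)
          ≤ (∫ ω, (Y ω - g (X ω))^2 ∂μ) + 4 * b^2 / m := by
  classical
  intro g hg
  rw [_root_.convexHull_eq] at hg
  obtain ⟨ι0, t, w, z, hw0, hw1, hz, hcm⟩ := hg
  have hm' : (m : ℝ) ≠ 0 := Nat.cast_ne_zero.mpr hm.ne'
  have hmpos : (0:ℝ) < m := Nat.cast_pos.mpr hm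
  set p : ↥t → ℝ := fun i => w i with hpdef
  have hp : ∀ i : ↥t, 0 ≤ p i := fun i => hw0 i i.2
  have hp1 : ∑ i : ↥t, p i = 1 := by rw [Finset.sum_coe_sort]; exact hw1
  choose c hc using fun i : ↥t => hz i.1 i.2
  have hgev : ∀ x, g x = ∑ i : ↥t, p i * f (c i) x := by
    intro x
    rw [← hcm, Finset.centerMass_eq_of_sum_1 _ _ hw1,
      ← Finset.sum_coe_sort t (fun i => w i • z i), Finset.sum_apply]
    refine Finset.sum_congr rfl fun i _ => ?_
    simp [hc i, hpdef]
  have hae : ∀ᵐ ω ∂μ, |Y ω| ≤ b ∧ ∀ j, |f j (X ω)| ≤ b := hYb.and (ae_all_iff.mpr hfb)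
  -- bound for averages
  have havg : ∀ (h : Fin m → Fin M) (x : 𝒳), (∀ j, |f j x| ≤ b) →
      |(1/m : ℝ) * ∑ i, f (h i) x| ≤ b := by
    intro h x hx
    have h1 : |∑ i : Fin m, f (h i) x| ≤ m * b := by
      calc |∑ i : Fin m, f (h i) x| ≤ ∑ i : Fin m, |f (h i) x| := Finset.abs_sum_le_sum_abs _ _
        _ ≤ ∑ _i : Fin m, b := Finset.sum_le_sum fun i _ => hx (h i)
        _ = m * b := by simp [Finset.card_univ, mul_comm]
    rw [abs_mul, abs_of_nonneg (by positivity : (0:ℝ) ≤ (1/m:ℝ))]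
    calc (1/m : ℝ) * |∑ i : Fin m, f (h i) x| ≤ (1/m : ℝ) * (m * b) := by
          apply mul_le_mul_of_nonneg_left h1 (by positivity)
      _ = b := by field_simp
  have intH : ∀ h : Fin m → Fin M,
      Integrable (fun ω => (Y ω - (1/m : ℝ) * ∑ i, f (h i) (X ω))^2) μ := by
    intro h
    apply sqint μ b
    · exact hY.sub (measurable_const.mul
        (Finset.measurable_sum _ fun i _ => (hfm (h i)).comp hX))
    · filter_upwards [hae] with ω hω
      obtain ⟨h1, h2⟩ := hω
      have := havg h (X ω) h2
      calc |Y ω - (1/m : ℝ) * ∑ i, f (h i) (X ω)| ≤ |Y ω| + |(1/m : ℝ) * ∑ i, f (h i) (X ω)| :=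
            abs_sub _ _
        _ ≤ 2*b := by linarith
  have intG : Integrable (fun ω => (Y ω - g (X ω))^2) μ := by
    have hrw : (fun ω => (Y ω - g (X ω))^2)
        = fun ω => (Y ω - ∑ i : ↥t, p i * f (c i) (X ω))^2 := by
      ext ω; rw [hgev]
    rw [hrw]
    apply sqint μ b
    · exact hY.sub (Finset.measurable_sum _ fun i _ => (measurable_const.mul ((hfm (c i)).comp hX)))
    · filter_upwards [hae] with ω hω
      obtain ⟨h1, h2⟩ := hω
      have hgb : |∑ i : ↥t, p i * f (c i) (X ω)| ≤ b := by
        calc |∑ i : ↥t, p i * f (c i) (X ω)| ≤ ∑ i : ↥t, |p i * f (c i) (X ω)| :=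
              Finset.abs_sum_le_sum_abs _ _
          _ ≤ ∑ i : ↥t, p i * b := by
            apply Finset.sum_le_sum
            intro i _
            rw [abs_mul, abs_of_nonneg (hp i)]
            exact mul_le_mul_of_nonneg_left (h2 (c i)) (hp i)
          _ = b := by rw [← Finset.sum_mul, hp1, one_mul]
      calc |Y ω - ∑ i : ↥t, p i * f (c i) (X ω)|
            ≤ |Y ω| + |∑ i : ↥t, p i * f (c i) (X ω)| := abs_sub _ _
        _ ≤ 2*b := by linarith
  set W : (Fin m → ↥t) → ℝ := fun h => ∏ k, p (h k) with hWdef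
  have hW0 : ∀ h, 0 ≤ W h := fun h => Finset.prod_nonneg fun k _ => hp _
  have hW1 : ∑ h : Fin m → ↥t, W h = 1 := by
    calc ∑ h : Fin m → ↥t, W h = ∏ _k : Fin m, ∑ j : ↥t, p j :=
          sum_prod_pi m fun _ j => p j
      _ = 1 := by rw [Finset.prod_const, hp1, one_pow]
  set r : (Fin m → ↥t) → ℝ :=
    fun h => ∫ ω, (Y ω - (1/m : ℝ) * ∑ i, f (c (h i)) (X ω))^2 ∂μ with hrdef
  set B : ℝ := (∫ ω, (Y ω - g (X ω))^2 ∂μ) + 4 * b^2 / m with hBdef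
  have key : ∑ h : Fin m → ↥t, W h * r h ≤ B := by
    have step1 : ∑ h : Fin m → ↥t, W h * r h
        = ∫ ω, ∑ h : Fin m → ↥t, W h * (Y ω - (1/m : ℝ) * ∑ i, f (c (h i)) (X ω))^2 ∂μ := by
      rw [integral_finset_sum _ fun h _ => (intH (fun i => c (h i))).const_mul (W h)]
      simp only [MeasureTheory.integral_const_mul, hrdef]
    rw [step1]
    have step2 : (∫ ω, ∑ h : Fin m → ↥t, W h * (Y ω - (1/m : ℝ) * ∑ i, f (c (h i)) (X ω))^2 ∂μ)
        ≤ ∫ ω, ((Y ω - g (X ω))^2 + 4 * b^2 / m) ∂μ := by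
      apply integral_mono_ae
        (integrable_finset_sum _ fun h _ => (intH (fun i => c (h i))).const_mul (W h))
        (intG.add (integrable_const _))
      filter_upwards [hae] with ω hω
      obtain ⟨h1, h2⟩ := hω
      have := maurey_key (p := p) hm hp hp1 (fun i => f (c i) (X ω)) (Y ω) b
        (fun i => h2 (c i))
      simp only [Pi.add_apply]
      rw [hgev (X ω)]
      simpa [hWdef] using this
    refine step2.trans_eq ?_
    rw [integral_add intG (integrable_const _), integral_const]
    simp [measure_univ, hBdef]
  have hex : ∃ h0 : Fin m → ↥t, r h0 ≤ B := by
    by_contra hcon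
    push_neg at hcon
    have hpos : ∃ h0 : Fin m → ↥t, 0 < W h0 := by
      by_contra hc2
      push_neg at hc2
      have hz : ∑ h : Fin m → ↥t, W h = 0 :=
        Finset.sum_eq_zero fun h _ => le_antisymm (hc2 h) (hW0 h)
      rw [hW1] at hz
      norm_num at hz
    obtain ⟨h0, hW0pos⟩ := hpos
    have hlt : B < ∑ h : Fin m → ↥t, W h * r h := by
      have hs := Finset.sum_lt_sum (f := fun h : Fin m → ↥t => W h * B)
        (g := fun h : Fin m → ↥t => W h * r h)
        (fun h _ => mul_le_mul_of_nonneg_left (hcon h).le (hW0 h))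
        ⟨h0, Finset.mem_univ _, mul_lt_mul_of_pos_left (hcon h0) hW0pos⟩
      calc B = ∑ h : Fin m → ↥t, W h * B := by rw [← Finset.sum_mul, hW1, one_mul]
        _ < _ := hs
    linarith
  obtain ⟨h0, hr⟩ := hex
  exact ⟨fun i => c (h0 i), hr⟩
end
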